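/- Let n, r be natural numbers, i, j : Fin n, and Y ∈ ℝ. Then the function U : Matrix (Fin n) (Fin r) ℝ ↦ |Y − (U * Uᵀ) i j| + ‖U‖_F² is convex, where ‖U‖_F denotes the Frobenius norm of U. Equivalently, the robust PCA component function U ↦ |Y − (U Uᵀ)_{ij}| is τ-weakly convex with parameter τ = 2 with respect to the Frobenius inner product. -/

import Mathlib

open Matrix Finset

variable {n r : ℕ}

private lemma convexOn_finset_sum {ι E : Type*} [AddCommGroup E] [Module ℝ E]
    (t : Finset ι) (f : ι → E → ℝ) (hf : ∀ k ∈ t, ConvexOn ℝ Set.univ (f k)) :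
    ConvexOn ℝ Set.univ (fun x => ∑ k ∈ t, f k x) := by
  classical
  induction t using Finset.induction_on with
  | empty => simpa using convexOn_const 0 convex_univ
  | @insert a s ha ih =>
    simp only [Finset.sum_insert ha]
    exact (hf a (Finset.mem_insert_self a s)).add
      (ih fun k hk => hf k (Finset.mem_insert_of_mem hk))

private lemma convexOn_sq_linear (L : Matrix (Fin n) (Fin r) ℝ →ₗ[ℝ] ℝ) :
    ConvexOn ℝ Set.univ (fun U => (L U) ^ 2) := by
  have h := (Even.convexOn_pow (even_two) : ConvexOn ℝ Set.univ fun x : ℝ => x ^ 2)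
  have := h.comp_affineMap L.toAffineMap
  exact this

private def coordL (l : Fin n) (k : Fin r) : Matrix (Fin n) (Fin r) ℝ →ₗ[ℝ] ℝ :=
  Matrix.entryLinearMap ℝ ℝ l k

theorem robust_pca_weaklyConvex
    (n r : ℕ) (i j : Fin n) (Y : ℝ) :
    ConvexOn ℝ Set.univ (fun U : Matrix (Fin n) (Fin r) ℝ =>
      |Y - (U * Uᵀ) i j| + ∑ i', ∑ j', (U i' j') ^ 2) := by
  classical
  set q : Matrix (Fin n) (Fin r) ℝ → ℝ := fun U => ∑ k, U i k * U j k with hq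
  set N : Matrix (Fin n) (Fin r) ℝ → ℝ := fun U => ∑ i', ∑ j', (U i' j') ^ 2 with hN
  -- the "reduced" quadratic: N minus half the i-row and j-row squares
  have hred : ConvexOn ℝ Set.univ (fun U : Matrix (Fin n) (Fin r) ℝ =>
      N U - (1/2) * ∑ k, (U i k)^2 - (1/2) * ∑ k, (U j k)^2) := by
    have key : ∀ U : Matrix (Fin n) (Fin r) ℝ,
        N U - (1/2) * ∑ k, (U i k)^2 - (1/2) * ∑ k, (U j k)^2
        = ∑ l, ∑ k, (1 - (if l = i then (1:ℝ)/2 else 0) - (if l = j then (1:ℝ)/2 else 0))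
            * (U l k)^2 := by
      intro U
      simp only [sub_mul, one_mul, ite_mul, zero_mul, Finset.sum_sub_distrib,
        Finset.sum_ite_eq, Finset.mem_univ, if_true]
      simp [hN, Finset.mul_sum, sub_sub]
    rw [funext key]
    apply convexOn_finset_sum
    intro l _
    apply convexOn_finset_sum
    intro k _
    have hc : (0:ℝ) ≤ 1 - (if l = i then (1:ℝ)/2 else 0) - (if l = j then (1:ℝ)/2 else 0) := by
      split <;> split <;> norm_num
    have := (convexOn_sq_linear (coordL l k)).smul hc
    simpa [coordL, smul_eq_mul] using this
  -- convexity of N ± q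
  have hNq : ∀ ε : ℝ, ε = 1 ∨ ε = -1 → ConvexOn ℝ Set.univ
      (fun U : Matrix (Fin n) (Fin r) ℝ => N U + ε * q U) := by
    intro ε hε
    have key : ∀ U : Matrix (Fin n) (Fin r) ℝ,
        N U + ε * q U
        = (N U - (1/2) * ∑ k, (U i k)^2 - (1/2) * ∑ k, (U j k)^2)
          + ∑ k, (1/2) * (U i k + ε * U j k)^2 := by
      intro U
      have hε2 : ε^2 = 1 := by rcases hε with h | h <;> simp [h]
      have : ∀ k : Fin r, (1/2 : ℝ) * (U i k + ε * U j k)^2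
          = (1/2) * (U i k)^2 + (1/2) * (U j k)^2 + ε * (U i k * U j k) := by
        intro k
        have : (U i k + ε * U j k)^2
            = (U i k)^2 + ε^2 * (U j k)^2 + 2 * ε * (U i k * U j k) := by ring
        rw [this, hε2]; ring
      rw [Finset.sum_congr rfl fun k _ => this k]
      simp [hq, Finset.sum_add_distrib, Finset.mul_sum]
      ring
    rw [funext key]
    apply hred.add
    apply convexOn_finset_sum
    intro k _
    have := (convexOn_sq_linear (coordL i k + ε • coordL j k)).smul (by norm_num : (0:ℝ) ≤ 1/2)
    simpa [coordL, smul_eq_mul] using this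
  -- rewrite target as a max
  have habs : ∀ U : Matrix (Fin n) (Fin r) ℝ,
      |Y - (U * Uᵀ) i j| + N U
      = max (Y + (N U + (-1) * q U)) (-Y + (N U + 1 * q U)) := by
    intro U
    have hm : (U * Uᵀ) i j = q U := by simp [Matrix.mul_apply, hq, Matrix.transpose_apply]
    rw [hm, abs_sub_comm]
    rcases abs_cases (q U - Y) with ⟨h1, h2⟩ | ⟨h1, h2⟩ <;>
      rw [h1] <;> [rw [max_eq_right (by linarith)]; rw [max_eq_left (by linarith)]] <;> ring
  have := ((convexOn_const Y convex_univ).add (hNq (-1) (Or.inr rfl))).sup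
    ((convexOn_const (-Y) convex_univ).add (hNq 1 (Or.inl rfl)))
  convert this using 1
  · rfl
  · rfl
  funext U
  simpa using habs U
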